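/- Let p be an odd prime and let ℤ_p denote the ring of p-adic integers. Then every group homomorphism φ : GL₂(ℤ_p) → {±1} factors through the determinant composed with reduction to the residue field: there exists a group homomorphism χ : (ℤ/pℤ)ˣ → {±1} such that φ(g) = χ(det(g) mod p) for all g ∈ GL₂(ℤ_p). In particular, φ is trivial on SL₂(ℤ_p) and on every g whose determinant lies in 1 + pℤ_p. -/

import Mathlib

open Matrix

section Aux

variable {p : ℕ} [Fact p.Prime]

/-- Upper elementary matrix. -/
private noncomputable def Eu (x : ℤ_[p]) : GL (Fin 2) ℤ_[p] :=
  ⟨!![1, x; 0, 1], !![1, -x; 0, 1],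
    by rw [Matrix.mul_fin_two, Matrix.one_fin_two]; ring_nf,
    by rw [Matrix.mul_fin_two, Matrix.one_fin_two]; ring_nf⟩

/-- Lower elementary matrix. -/
private noncomputable def Fu (y : ℤ_[p]) : GL (Fin 2) ℤ_[p] :=
  ⟨!![1, 0; y, 1], !![1, 0; -y, 1],
    by rw [Matrix.mul_fin_two, Matrix.one_fin_two]; ring_nf,
    by rw [Matrix.mul_fin_two, Matrix.one_fin_two]; ring_nf⟩

/-- Diagonal matrix diag(u, 1). -/
private noncomputable def Du (u : ℤ_[p]ˣ) : GL (Fin 2) ℤ_[p] :=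
  ⟨!![(u : ℤ_[p]), 0; 0, 1], !![((u⁻¹ : ℤ_[p]ˣ) : ℤ_[p]), 0; 0, 1],
    by rw [Matrix.mul_fin_two, Matrix.one_fin_two]; simp,
    by rw [Matrix.mul_fin_two, Matrix.one_fin_two]; simp⟩

private lemma Eu_mul (x y : ℤ_[p]) : Eu x * Eu y = Eu (x + y) := by
  ext : 1
  show !![(1:ℤ_[p]), x; 0, 1] * !![1, y; 0, 1] = !![1, x + y; 0, 1]
  rw [Matrix.mul_fin_two]; ring_nf

private lemma Fu_mul (x y : ℤ_[p]) : Fu x * Fu y = Fu (x + y) := by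
  ext : 1
  show !![(1:ℤ_[p]), 0; x, 1] * !![1, 0; y, 1] = !![1, 0; x + y, 1]
  rw [Matrix.mul_fin_two]; ring_nf

private lemma Du_mul (u v : ℤ_[p]ˣ) : Du u * Du v = Du (u * v) := by
  ext : 1
  show !![(u : ℤ_[p]), 0; 0, 1] * !![(v : ℤ_[p]), 0; 0, 1]
      = !![((u*v : ℤ_[p]ˣ) : ℤ_[p]), 0; 0, 1]
  rw [Matrix.mul_fin_two]
  simp

private lemma det_Du (u : ℤ_[p]ˣ) :
    ((Du u : GL (Fin 2) ℤ_[p]) : Matrix (Fin 2) (Fin 2) ℤ_[p]).det = (u : ℤ_[p]) := by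
  show (!![(u : ℤ_[p]), 0; 0, 1]).det = (u : ℤ_[p])
  rw [Matrix.det_fin_two_of]; ring

variable (hp : Odd p) (φ : Matrix.GeneralLinearGroup (Fin 2) ℤ_[p] →* ℤˣ)

private lemma phi_sq (h : GL (Fin 2) ℤ_[p]) : φ (h * h) = 1 := by
  rw [_root_.map_mul, Int.units_mul_self]

include hp

private lemma two_unit : IsUnit (2 : ℤ_[p]) := by
  by_contra h
  rw [PadicInt.not_isUnit_iff, PadicInt.norm_lt_one_iff_dvd] at h
  obtain ⟨c, hc⟩ := h
  have h2 : (PadicInt.toZMod (p := p)) 2 = 0 := by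
    rw [hc, _root_.map_mul]
    have hpz : (PadicInt.toZMod (p := p)) (p : ℤ_[p]) = 0 := by
      rw [map_natCast, ZMod.natCast_self]
    rw [hpz, zero_mul]
  have h2' : ((2 : ℕ) : ZMod p) = 0 := by
    rwa [show ((2 : ℤ_[p])) = ((2 : ℕ) : ℤ_[p]) by norm_num, map_natCast] at h2
  have hdvd : p ∣ 2 := (ZMod.natCast_eq_zero_iff 2 p).mp h2'
  have hp2 : p = 2 := (Nat.prime_dvd_prime_iff_eq Fact.out Nat.prime_two).mp hdvd
  rw [hp2] at hp
  simp [Nat.odd_iff] at hp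

/-- Every element of ℤ_[p] is twice something (p odd). -/
private lemma half_exists (x : ℤ_[p]) : ∃ y : ℤ_[p], y + y = x := by
  obtain ⟨u, hu⟩ := two_unit (p := p) hp
  refine ⟨(↑u⁻¹ : ℤ_[p]) * x, ?_⟩
  have h2 : (2 : ℤ_[p]) * ((↑u⁻¹ : ℤ_[p]) * x) = x := by
    rw [← hu, ← mul_assoc, u.mul_inv, one_mul]
  linear_combination h2

private lemma phi_Eu (x : ℤ_[p]) : φ (Eu x) = 1 := by
  obtain ⟨y, hy⟩ := half_exists hp x
  rw [← hy, ← Eu_mul, phi_sq]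

private lemma phi_Fu (x : ℤ_[p]) : φ (Fu x) = 1 := by
  obtain ⟨y, hy⟩ := half_exists hp x
  rw [← hy, ← Fu_mul, phi_sq]

/-- If the lower-left entry is a unit and det = 1, then φ s = 1. -/
private lemma key1 (s : GL (Fin 2) ℤ_[p]) (hdet : (s : Matrix (Fin 2) (Fin 2) ℤ_[p]).det = 1)
    (hc : IsUnit ((s : Matrix (Fin 2) (Fin 2) ℤ_[p]) 1 0)) : φ s = 1 := by
  set M : Matrix (Fin 2) (Fin 2) ℤ_[p] := (s : Matrix (Fin 2) (Fin 2) ℤ_[p]) with hM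
  obtain ⟨cu, hcu⟩ := hc
  have hk : (↑cu⁻¹ : ℤ_[p]) * M 1 0 = 1 := by rw [← hcu, cu.inv_mul]
  have hdet2 : M 0 0 * M 1 1 - M 0 1 * M 1 0 = 1 := by
    rw [← Matrix.det_fin_two]; exact hdet
  have hs : s = Eu ((↑cu⁻¹ : ℤ_[p]) * (M 0 0 - 1)) * Fu (M 1 0)
      * Eu ((↑cu⁻¹ : ℤ_[p]) * (M 1 1 - 1)) := by
    ext : 1
    show M = !![1, (↑cu⁻¹ : ℤ_[p]) * (M 0 0 - 1); 0, 1] * !![1, 0; M 1 0, 1]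
        * !![1, (↑cu⁻¹ : ℤ_[p]) * (M 1 1 - 1); 0, 1]
    rw [Matrix.mul_fin_two, Matrix.mul_fin_two]
    ext i j
    fin_cases i <;> fin_cases j
    · show M 0 0 = (1 * 1 + (↑cu⁻¹ : ℤ_[p]) * (M 0 0 - 1) * M 1 0) * 1
        + (1 * 0 + (↑cu⁻¹ : ℤ_[p]) * (M 0 0 - 1) * 1) * 0
      linear_combination (1 - M 0 0) * hk
    · show M 0 1 = (1 * 1 + (↑cu⁻¹ : ℤ_[p]) * (M 0 0 - 1) * M 1 0)
          * ((↑cu⁻¹ : ℤ_[p]) * (M 1 1 - 1))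
        + (1 * 0 + (↑cu⁻¹ : ℤ_[p]) * (M 0 0 - 1) * 1) * 1
      linear_combination (- ((↑cu⁻¹ : ℤ_[p]) * (M 0 0 - 1) * (M 1 1 - 1)) - M 0 1) * hk
        - (↑cu⁻¹ : ℤ_[p]) * hdet2
    · show M 1 0 = (0 * 1 + 1 * M 1 0) * 1 + (0 * 0 + 1 * 1) * 0
      ring
    · show M 1 1 = (0 * 1 + 1 * M 1 0) * ((↑cu⁻¹ : ℤ_[p]) * (M 1 1 - 1)) + (0 * 0 + 1 * 1) * 1
      linear_combination (1 - M 1 1) * hk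
  rw [hs, _root_.map_mul, _root_.map_mul, phi_Eu hp, phi_Fu hp, phi_Eu hp, one_mul, one_mul]

/-- φ is trivial on SL₂. -/
private lemma phi_SL (s : GL (Fin 2) ℤ_[p])
    (hdet : (s : Matrix (Fin 2) (Fin 2) ℤ_[p]).det = 1) : φ s = 1 := by
  by_cases hc : IsUnit ((s : Matrix (Fin 2) (Fin 2) ℤ_[p]) 1 0)
  · exact key1 hp φ s hdet hc
  · set M : Matrix (Fin 2) (Fin 2) ℤ_[p] := (s : Matrix (Fin 2) (Fin 2) ℤ_[p]) with hM
    have ha : IsUnit (M 0 0) := by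
      by_contra ha
      have h1 : M 0 0 * M 1 1 ∈ nonunits ℤ_[p] := fun h => ha (isUnit_of_mul_isUnit_left h)
      have h2 : -(M 0 1 * M 1 0) ∈ nonunits ℤ_[p] := by
        intro h
        exact hc (isUnit_of_mul_isUnit_right ((IsUnit.neg_iff _).mp h))
      have h3 := IsLocalRing.nonunits_add h1 h2
      rw [← sub_eq_add_neg, ← Matrix.det_fin_two, hdet] at h3
      exact h3 isUnit_one
    set s' : GL (Fin 2) ℤ_[p] := Fu 1 * s with hs'
    have hval : (s' : Matrix (Fin 2) (Fin 2) ℤ_[p]) = !![(1:ℤ_[p]), 0; 1, 1] * M := rfl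
    have hdet' : (s' : Matrix (Fin 2) (Fin 2) ℤ_[p]).det = 1 := by
      rw [hval, Matrix.det_mul, Matrix.det_fin_two_of, hdet]; ring
    have hentry : (s' : Matrix (Fin 2) (Fin 2) ℤ_[p]) 1 0 = M 0 0 + M 1 0 := by
      rw [hval]
      simp [Matrix.mul_apply, Fin.sum_univ_two]
    have hc' : IsUnit ((s' : Matrix (Fin 2) (Fin 2) ℤ_[p]) 1 0) := by
      rw [hentry]
      by_contra h
      have h4 : -(M 1 0) ∈ nonunits ℤ_[p] := fun hu => hc ((IsUnit.neg_iff _).mp hu)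
      have h5 := IsLocalRing.nonunits_add (h : M 0 0 + M 1 0 ∈ nonunits ℤ_[p]) h4
      rw [add_neg_cancel_right] at h5
      exact h5 ha
    have h1 : φ s' = 1 := key1 hp φ s' hdet' hc'
    have h6 : φ s' = φ (Fu 1) * φ s := by rw [hs', _root_.map_mul]
    rw [phi_Fu hp, one_mul] at h6
    rw [← h6, h1]

/-- Units congruent to 1 mod p are squares (p odd), via Hensel's lemma. -/
private lemma sqrt_exists (u : ℤ_[p]ˣ)
    (hu : PadicInt.toZMod ((u : ℤ_[p])) = 1) : ∃ v : ℤ_[p]ˣ, v * v = u := by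
  have h2 : IsUnit (2 : ℤ_[p]) := two_unit hp
  -- ‖1 - u‖ < 1
  have hmem : (1 - (u : ℤ_[p])) ∈ RingHom.ker (PadicInt.toZMod (p := p)) := by
    rw [RingHom.mem_ker, map_sub, _root_.map_one, hu, sub_self]
  rw [PadicInt.ker_toZMod] at hmem
  have hnorm1 : ‖1 - (u : ℤ_[p])‖ < 1 := by
    have := PadicInt.norm_lt_one_iff_dvd (1 - (u : ℤ_[p]))
    rw [this]
    rwa [IsLocalRing.mem_maximalIdeal, mem_nonunits_iff, PadicInt.not_isUnit_iff,
      PadicInt.norm_lt_one_iff_dvd] at hmem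
  set F : Polynomial ℤ_[p] := Polynomial.X ^ 2 - Polynomial.C (u : ℤ_[p]) with hF
  have heval : F.eval 1 = 1 - (u : ℤ_[p]) := by simp [hF]
  have hderiv : F.derivative.eval 1 = 2 := by
    simp [hF, Polynomial.derivative_sub, Polynomial.derivative_X_pow]; norm_num
  have hd2 : ‖F.derivative.eval 1‖ = 1 := by
    rw [hderiv]; exact PadicInt.isUnit_iff.mp h2
  have hlt : ‖F.eval 1‖ < ‖F.derivative.eval 1‖ ^ 2 := by
    rw [heval, hd2, one_pow]; exact hnorm1
  obtain ⟨z, hz, -⟩ := hensels_lemma hlt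
  have hz2 : z * z = (u : ℤ_[p]) := by
    have : z ^ 2 - (u : ℤ_[p]) = 0 := by simpa [hF] using hz
    have h := sub_eq_zero.mp this
    rw [← h]; ring
  have hzu : IsUnit z := by
    have : IsUnit (z * z) := by rw [hz2]; exact u.isUnit
    exact isUnit_of_mul_isUnit_left this
  obtain ⟨v, hv⟩ := hzu
  exact ⟨v, Units.ext (by rw [Units.val_mul, hv, hz2])⟩

/-- φ vanishes on elements whose determinant is ≡ 1 mod p. -/
private lemma phi_ker (g : GL (Fin 2) ℤ_[p])
    (h : PadicInt.toZMod ((Matrix.GeneralLinearGroup.det g : ℤ_[p]ˣ) : ℤ_[p]) = 1) :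
    φ g = 1 := by
  set U : ℤ_[p]ˣ := Matrix.GeneralLinearGroup.det g with hU
  obtain ⟨v, hv⟩ := sqrt_exists hp U h
  have hsplit : g = Du U * ((Du U)⁻¹ * g) := by group
  have hdets : (((Du U)⁻¹ * g : GL (Fin 2) ℤ_[p]) : Matrix (Fin 2) (Fin 2) ℤ_[p]).det = 1 := by
    have hdd : Matrix.GeneralLinearGroup.det ((Du U)⁻¹ * g) = 1 := by
      rw [_root_.map_mul, map_inv]
      have : Matrix.GeneralLinearGroup.det (Du U) = U := by
        apply Units.ext
        rw [Matrix.GeneralLinearGroup.val_det_apply, det_Du]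
      rw [this, hU, inv_mul_cancel]
    have := congrArg Units.val hdd
    rwa [Matrix.GeneralLinearGroup.val_det_apply, Units.val_one] at this
  have hDu : φ (Du U) = 1 := by
    rw [← hv, ← Du_mul, phi_sq]
  rw [hsplit, _root_.map_mul, hDu, one_mul]
  exact phi_SL hp φ _ hdets

end Aux

/-- For an odd prime `p`, every homomorphism `φ : GL₂(ℤ_p) → {±1}` factors as a
character of `(ℤ/pℤ)ˣ` composed with the reduction of the determinant; in
particular `φ` is trivial on `SL₂(ℤ_p)` and on every `g` whose determinant lies
in `1 + pℤ_p`. -/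
theorem stmt_15 (p : ℕ) [Fact p.Prime] (hp : Odd p)
    (φ : Matrix.GeneralLinearGroup (Fin 2) ℤ_[p] →* ℤˣ) :
    ∃ χ : (ZMod p)ˣ →* ℤˣ,
      (∀ g : Matrix.GeneralLinearGroup (Fin 2) ℤ_[p],
        φ g = χ (Units.map (PadicInt.toZMod (p := p)).toMonoidHom
          (Matrix.GeneralLinearGroup.det g))) ∧
      (∀ g : Matrix.GeneralLinearGroup (Fin 2) ℤ_[p],
        Matrix.GeneralLinearGroup.det g = 1 → φ g = 1) ∧
      (∀ g : Matrix.GeneralLinearGroup (Fin 2) ℤ_[p],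
        PadicInt.toZMod ((Matrix.GeneralLinearGroup.det g : ℤ_[p]ˣ) : ℤ_[p]) = 1 →
          φ g = 1) := by
  -- the composite homomorphism `det mod p`
  set ψ : Matrix.GeneralLinearGroup (Fin 2) ℤ_[p] →* (ZMod p)ˣ :=
    (Units.map (PadicInt.toZMod (p := p)).toMonoidHom).comp
      (Matrix.GeneralLinearGroup.det) with hψ
  -- ψ is surjective
  have hsurj : Function.Surjective ψ := by
    intro w
    set a : ℤ_[p] := ((w : ZMod p).val : ℤ_[p]) with ha
    have haw : PadicInt.toZMod a = (w : ZMod p) := by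
      rw [ha, map_natCast, ZMod.natCast_val, ZMod.cast_id]
    have hau : IsUnit a := by
      by_contra h
      rw [PadicInt.not_isUnit_iff, PadicInt.norm_lt_one_iff_dvd] at h
      obtain ⟨c, hc⟩ := h
      have : PadicInt.toZMod a = 0 := by
        rw [hc, _root_.map_mul, map_natCast, ZMod.natCast_self, zero_mul]
      rw [haw] at this
      exact w.ne_zero this
    obtain ⟨au, hau'⟩ := hau
    refine ⟨Du au, ?_⟩
    apply Units.ext
    have hdet : Matrix.GeneralLinearGroup.det (Du au) = au := by
      apply Units.ext
      rw [Matrix.GeneralLinearGroup.val_det_apply, det_Du]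
    rw [hψ]
    simp only [MonoidHom.comp_apply, hdet]
    show PadicInt.toZMod ((au : ℤ_[p])) = (w : ZMod p)
    rw [hau', haw]
  -- kernel of ψ is contained in kernel of φ
  have hker : ψ.ker ≤ φ.ker := by
    intro g hg
    rw [MonoidHom.mem_ker] at hg ⊢
    apply phi_ker hp φ g
    have h1 : ((ψ g : (ZMod p)ˣ) : ZMod p) = 1 := by rw [hg]; rfl
    rw [hψ] at h1
    simp only [MonoidHom.comp_apply, Units.coe_map, MonoidHom.coe_coe,
      Matrix.GeneralLinearGroup.val_det_apply] at h1
    exact h1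
  -- lift φ through ψ
  refine ⟨ψ.liftOfSurjective hsurj ⟨φ, hker⟩, ?_, ?_, ?_⟩
  · intro g
    exact (ψ.liftOfRightInverse_comp_apply _ _ ⟨φ, hker⟩ g).symm
  · intro g hg
    apply phi_ker hp φ g
    rw [hg, Units.val_one, _root_.map_one]
  · exact phi_ker hp φ
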